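/- arXiv:1812.03747 — 3 statements merged into one kernel-verified Lean document; each statement's English description precedes it below -/
import Mathlib

section
/- Let Φ be a T-gain graph with underlying graph G. Then the spectral radius σ = max_i |λ_i(A(Φ))| satisfies σ ≥ (1/√2) · max_{i<j} sqrt( d_i + d_j + sqrt( (d_i - d_j)^2 + 4 |a_{ij}^{(2)}|^2 ) ), where a_{ij}^{(2)} is the (i,j) entry of A(Φ)^2 and d_i, d_j are the degrees of v_i, v_j. -/
open scoped Classical
open Matrix

variable {V : Type*}

/-- The adjacency matrix of a `𝕋`-gain graph `Φ = (G, φ)`. -/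
noncomputable def gainAdj [Fintype V] (G : SimpleGraph V) (φ : V → V → ℂ) :
    Matrix V V ℂ := fun i j => if G.Adj i j then φ i j else 0

/-- `φ` is a complex unit gain function on `G`: each gain is a unit complex number and
`φ(e_{ji}) = φ(e_{ij})⁻¹`. -/
def IsGain (G : SimpleGraph V) (φ : V → V → ℂ) : Prop :=
  (∀ i j, G.Adj i j → ‖φ i j‖ = 1) ∧ (∀ i j, G.Adj i j → φ i j * φ j i = 1)

/-- The gain of a walk: the product of the gains of its (oriented) edges. -/
noncomputable def walkGain (φ : V → V → ℂ) {G : SimpleGraph V} {u v : V} (p : G.Walk u v) : ℂ :=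
  (p.darts.map (fun d => φ d.toProd.1 d.toProd.2)).prod

/-- A gain graph is balanced if every cycle has gain `1`. -/
def IsBalanced (G : SimpleGraph V) (φ : V → V → ℂ) : Prop :=
  ∀ (v : V) (p : G.Walk v v), p.IsCycle → walkGain φ p = 1

/-- `Σ_{C ∈ C_i(G)} Re(φ(C))`: each unoriented, unrooted cycle of length `i` corresponds to
exactly `2·i` rooted oriented cycle walks, all having the same real part of the gain. -/
noncomputable def cycleRSum (G : SimpleGraph V) (φ : V → V → ℂ) (i : ℕ) : ℝ :=
  (∑ᶠ q : {q : Σ' v : V, G.Walk v v // q.snd.IsCycle ∧ q.snd.length = i},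
      (walkGain φ q.1.snd).re) / (2 * i)

/-- Rayleigh-type bound: `(x* (A*A) x).re ≤ s ∑ |x k|²` when all squared eigenvalues are `≤ s`. -/
lemma rayleigh_sq_bound {n : ℕ} {A : Matrix (Fin n) (Fin n) ℂ} (hA : A.IsHermitian)
    {s : ℝ} (hs : ∀ t, (hA.eigenvalues t) ^ 2 ≤ s) (x : Fin n → ℂ) :
    (dotProduct (star x) ((A * A) *ᵥ x)).re ≤ s * ∑ k, ‖x k‖ ^ 2 := by
  classical
  set z : Fin n → ℂ := A *ᵥ x with hz
  have hstep : dotProduct (star x) ((A * A) *ᵥ x) = dotProduct (star z) z := by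
    rw [← Matrix.mulVec_mulVec, dotProduct_mulVec, hz]
    congr 1
    rw [Matrix.star_mulVec, hA.eq]
  have hre : (dotProduct (star z) z).re = ∑ k, ‖z k‖ ^ 2 := by
    rw [dotProduct]
    rw [Complex.re_sum]
    refine Finset.sum_congr rfl fun k _ => ?_
    simp [Complex.sq_norm, Complex.normSq_apply, Complex.mul_re]
  rw [hstep, hre]
  -- now bound `∑ |z k|²` by `s ∑ |x k|²` via the eigenbasis
  set b := hA.eigenvectorBasis with hb
  set X : EuclideanSpace ℂ (Fin n) := (WithLp.equiv 2 _).symm x with hX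
  set Z : EuclideanSpace ℂ (Fin n) := (WithLp.equiv 2 _).symm z with hZ
  have hnorm : ∀ (y : EuclideanSpace ℂ (Fin n)),
      ‖y‖ ^ 2 = ∑ t, ‖b.repr y t‖ ^ 2 := by
    intro y
    rw [← b.repr.norm_map y, EuclideanSpace.norm_eq, Real.sq_sqrt (by positivity)]
  have hrep : ∀ t, b.repr Z t = (hA.eigenvalues t : ℂ) * b.repr X t := by
    intro t
    rw [OrthonormalBasis.repr_apply_apply, OrthonormalBasis.repr_apply_apply,
      EuclideanSpace.inner_eq_star_dotProduct, EuclideanSpace.inner_eq_star_dotProduct]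
    have h1 : star (⇑(b t)) ᵥ* A = star (hA.eigenvalues t • ⇑(b t)) := by
      rw [← hA.mulVec_eigenvectorBasis t, Matrix.star_mulVec, hA.eq]
    rw [dotProduct_comm Z.ofLp, dotProduct_comm X.ofLp]
    show star (⇑(b t)) ⬝ᵥ z = _
    rw [hz, dotProduct_mulVec, h1]
    simp [smul_dotProduct, star_smul, Complex.real_smul, hX, Equiv.apply_symm_apply]
  have hZsum : ∑ k, ‖z k‖ ^ 2 = ‖Z‖ ^ 2 := by
    rw [EuclideanSpace.norm_eq, Real.sq_sqrt (by positivity)]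
    simp [hZ]
  have hXsum : ∑ k, ‖x k‖ ^ 2 = ‖X‖ ^ 2 := by
    rw [EuclideanSpace.norm_eq, Real.sq_sqrt (by positivity)]
    simp [hX]
  rw [hZsum, hXsum, hnorm Z, hnorm X, Finset.mul_sum]
  refine Finset.sum_le_sum fun t _ => ?_
  rw [hrep t, norm_mul]
  have h2 : ‖((hA.eigenvalues t : ℂ))‖ ^ 2 = (hA.eigenvalues t) ^ 2 := by
    rw [Complex.norm_real, Real.norm_eq_abs, sq_abs]
  rw [mul_pow, h2]
  have := hs t
  nlinarith [sq_nonneg (‖b.repr X t‖)]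

/-- The spectral radius `σ = max |λ_i(A(Φ))|` satisfies, for all `i < j`,
`σ ≥ (1/√2) √( d_i + d_j + √((d_i - d_j)² + 4 |a_{ij}^{(2)}|²) )`. -/
theorem spectral_radius_degree_lower_bound {n : ℕ} (G : SimpleGraph (Fin n))
    [DecidableRel G.Adj] (φ : Fin n → Fin n → ℂ) (hφ : IsGain G φ)
    (hA : (gainAdj G φ).IsHermitian) (i j : Fin n) (hij : i ≠ j) :
    ∃ t : Fin n,
      (1 / Real.sqrt 2) *
        Real.sqrt ((G.degree i : ℝ) + (G.degree j : ℝ) +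
          Real.sqrt (((G.degree i : ℝ) - (G.degree j : ℝ)) ^ 2 +
            4 * ‖(gainAdj G φ ^ 2) i j‖ ^ 2)) ≤ |hA.eigenvalues t| := by
  classical
  set A := gainAdj G φ with hAdef
  have hpow : A ^ 2 = A * A := sq A
  set p : ℝ := (G.degree i : ℝ) with hp0
  set q : ℝ := (G.degree j : ℝ) with hq0
  set w : ℂ := (A * A) i j with hw
  set r : ℝ := ‖w‖ with hr
  -- diagonal entries of A² are degrees
  have hdiag : ∀ v, (A * A) v v = ((G.degree v : ℝ) : ℂ) := by
    intro v
    rw [Matrix.mul_apply]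
    have hterm : ∀ k, A v k * A k v = if G.Adj v k then (1 : ℂ) else 0 := by
      intro k
      by_cases h : G.Adj v k
      · simp [hAdef, gainAdj, h, h.symm, hφ.2 v k h]
      · have h' : ¬ G.Adj k v := fun h2 => h h2.symm
        simp [hAdef, gainAdj, h, h']
    simp_rw [hterm]
    rw [Finset.sum_boole]
    rw [SimpleGraph.degree, SimpleGraph.neighborFinset_eq_filter]
    push_cast
    rfl
  -- A² is Hermitian
  have hB : (A * A).IsHermitian := by simpa [pow_two] using hA.pow 2
  have hBji : (A * A) j i = star w := by rw [hw, ← hB.apply i j, star_star]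
  -- the top squared eigenvalue
  obtain ⟨t₀, -, ht₀⟩ := Finset.exists_max_image (Finset.univ : Finset (Fin n))
    (fun t => hA.eigenvalues t ^ 2) ⟨i, Finset.mem_univ i⟩
  set s : ℝ := hA.eigenvalues t₀ ^ 2 with hs0
  have hs : ∀ t, hA.eigenvalues t ^ 2 ≤ s := fun t => ht₀ t (Finset.mem_univ t)
  -- quadratic form of vectors supported on {i, j}
  have hquad : ∀ (c d : ℂ),
      dotProduct (star (Pi.single i c + Pi.single j d))
        ((A * A) *ᵥ (Pi.single i c + Pi.single j d))
      = star c * c * (A * A) i i + star c * d * (A * A) i j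
        + star d * c * (A * A) j i + star d * d * (A * A) j j := by
    intro c d
    simp only [star_add, ← Pi.single_star, Matrix.mulVec_add, Matrix.mulVec_single,
      add_dotProduct, dotProduct_add, single_dotProduct, Pi.smul_apply, op_smul_eq_mul,
      Matrix.col_apply]
    ring
  have hsum : ∀ (c d : ℂ),
      ∑ k, ‖(Pi.single i c + Pi.single j d : Fin n → ℂ) k‖ ^ 2
      = ‖c‖ ^ 2 + ‖d‖ ^ 2 := by
    intro c d
    have hptw : ∀ k, ‖(Pi.single i c + Pi.single j d : Fin n → ℂ) k‖ ^ 2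
        = (if k = i then ‖c‖ ^ 2 else 0)
          + (if k = j then ‖d‖ ^ 2 else 0) := by
      intro k
      by_cases h1 : k = i <;> by_cases h2 : k = j
      · exact absurd (h1 ▸ h2) hij
      · subst h1; simp [Pi.single_apply, hij, h2, Ne.symm hij]
      · subst h2; simp [Pi.single_apply, h1, hij, Ne.symm hij]
      · simp [Pi.single_apply, h1, h2]
    simp_rw [hptw]
    rw [Finset.sum_add_distrib]
    simp
  -- degrees are at most s
  have hp : p ≤ s := by
    have h := rayleigh_sq_bound hA hs (Pi.single i 1 + Pi.single j 0)
    rw [hquad 1 0, hsum 1 0, hdiag i] at h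
    simpa using h
  have hq : q ≤ s := by
    have h := rayleigh_sq_bound hA hs (Pi.single i 0 + Pi.single j 1)
    rw [hquad 0 1, hsum 0 1, hdiag j] at h
    simpa using h
  -- the quadratic inequality in t
  have hineq : ∀ t : ℝ, r ^ 2 * p + 2 * t * r ^ 2 + t ^ 2 * q ≤ s * (r ^ 2 + t ^ 2) := by
    intro t
    have h := rayleigh_sq_bound hA hs (Pi.single i w + Pi.single j (t : ℂ))
    rw [hquad w (t : ℂ), hsum w (t : ℂ), hdiag i, hdiag j, hBji, ← hw] at h
    simp only [Complex.star_def, Complex.conj_ofReal] at h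
    have hws : (starRingEnd ℂ) w * w = ((r ^ 2 : ℝ) : ℂ) := by
      rw [hr, Complex.sq_norm, Complex.normSq_eq_conj_mul_self]
    have heq : (starRingEnd ℂ) w * w * ((G.degree i : ℝ) : ℂ) + (starRingEnd ℂ) w * (t : ℂ) * w
        + (t : ℂ) * w * (starRingEnd ℂ) w + (t : ℂ) * (t : ℂ) * ((G.degree j : ℝ) : ℂ)
        = ((r ^ 2 * p + 2 * t * r ^ 2 + t ^ 2 * q : ℝ) : ℂ) := by
      have h3 : (starRingEnd ℂ) w * w * ((G.degree i : ℝ) : ℂ) + (starRingEnd ℂ) w * (t : ℂ) * w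
          + (t : ℂ) * w * (starRingEnd ℂ) w + (t : ℂ) * (t : ℂ) * ((G.degree j : ℝ) : ℂ)
          = ((starRingEnd ℂ) w * w) * (((G.degree i : ℝ) : ℂ) + 2 * (t : ℂ))
            + (t : ℂ) ^ 2 * ((G.degree j : ℝ) : ℂ) := by
        ring
      rw [h3, hws, hp0, hq0]
      push_cast
      ring
    rw [heq, Complex.ofReal_re] at h
    have habs : ‖w‖ ^ 2 + ‖(t : ℂ)‖ ^ 2 = r ^ 2 + t ^ 2 := by
      rw [hr, Complex.norm_real, Real.norm_eq_abs, sq_abs]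
    rw [habs] at h
    exact h
  -- deduce r² ≤ (s - p)(s - q)
  have key : r ^ 2 ≤ (s - p) * (s - q) := by
    have hr0 : 0 ≤ r := norm_nonneg w
    rcases eq_or_lt_of_le hr0 with h0 | hrpos
    · nlinarith
    · by_cases hsq : s - q = 0
      · exfalso
        have h := hineq ((s - p) / 2 + 1)
        nlinarith
      · have hu : 0 < s - q := lt_of_le_of_ne (by linarith) (Ne.symm hsq)
        have h := hineq (r ^ 2 / (s - q))
        have htu : r ^ 2 / (s - q) * (s - q) = r ^ 2 := div_mul_cancel₀ _ hsq
        nlinarith [sq_nonneg (r ^ 2 / (s - q)), mul_pos hrpos hrpos]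
  -- conclude
  refine ⟨t₀, ?_⟩
  have hr' : ‖(gainAdj G φ ^ 2) i j‖ = r := by rw [hpow]
  rw [hr']
  have hpnn : 0 ≤ p := Nat.cast_nonneg _
  have hqnn : 0 ≤ q := Nat.cast_nonneg _
  have hsqrt : Real.sqrt ((p - q) ^ 2 + 4 * r ^ 2) ≤ 2 * s - p - q := by
    have hnn : 0 ≤ 2 * s - p - q := by linarith
    rw [← Real.sqrt_sq hnn]
    apply Real.sqrt_le_sqrt
    nlinarith
  set X : ℝ := p + q + Real.sqrt ((p - q) ^ 2 + 4 * r ^ 2) with hX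
  have hXnn : 0 ≤ X := by positivity
  have hX2s : X ≤ 2 * s := by
    have := Real.sqrt_nonneg ((p - q) ^ 2 + 4 * r ^ 2)
    simp only [hX]; linarith
  have hform : (1 / Real.sqrt 2) * Real.sqrt X = Real.sqrt (X / 2) := by
    rw [Real.sqrt_div hXnn]
    ring
  rw [hform]
  have : Real.sqrt (X / 2) ≤ Real.sqrt s := Real.sqrt_le_sqrt (by linarith)
  calc Real.sqrt (X / 2) ≤ Real.sqrt s := this
    _ = |hA.eigenvalues t₀| := by rw [hs0, Real.sqrt_sq_eq_abs]
end

section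
/- Let Φ = (G, φ) be a T-gain graph whose eigenvalues are symmetric about 0. If for every odd i the sum Σ_{C ∈ C_i(G)} Re(φ(C)) over all cycles of length i in G is nonzero whenever C_i(G) is nonempty, then G is bipartite. -/
open scoped Classical

variable {V : Type*}

open SimpleGraph

section Aux

lemma walkGain_nil {φ : V → V → ℂ} {G : SimpleGraph V} {u : V} :
    walkGain φ (Walk.nil : G.Walk u u) = 1 := by simp [walkGain]

lemma walkGain_cons {φ : V → V → ℂ} {G : SimpleGraph V} {u v w : V} (h : G.Adj u v)
    (p : G.Walk v w) : walkGain φ (Walk.cons h p) = φ u v * walkGain φ p := by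
  simp [walkGain]

lemma gainAdj_pow_apply [Fintype V] [DecidableEq V] (G : SimpleGraph V) (φ : V → V → ℂ)
    (k : ℕ) : ∀ u v : V, (gainAdj G φ ^ k) u v = ∑ p ∈ G.finsetWalkLength k u v, walkGain φ p := by
  induction k with
  | zero =>
    intro u v
    rw [pow_zero]
    by_cases h : u = v
    · subst h
      have hs : G.finsetWalkLength 0 u u = {Walk.nil} := by
        ext p
        simp [SimpleGraph.mem_finsetWalkLength_iff, Walk.length_eq_zero_iff]
      simp [hs, Matrix.one_apply, walkGain_nil]
    · have hs : G.finsetWalkLength 0 u v = ∅ := by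
        ext p
        simp only [SimpleGraph.mem_finsetWalkLength_iff, Finset.notMem_empty, iff_false]
        exact fun hp => h (Walk.eq_of_length_eq_zero hp)
      simp [hs, Matrix.one_apply, h]
  | succ k ih =>
    intro u v
    rw [pow_succ', Matrix.mul_apply]
    have hset : G.finsetWalkLength (k + 1) u v = Finset.univ.biUnion
        (fun (w : G.neighborSet u) =>
          (G.finsetWalkLength k w v).map ⟨fun p => Walk.cons w.property p, fun a b h => by injection h⟩) :=
      rfl
    rw [hset, Finset.sum_biUnion ?hdisj]
    case hdisj =>
      rintro ⟨x, hx⟩ - ⟨y, hy⟩ - hxy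
      rw [Function.onFun, Finset.disjoint_left]
      rintro p hp hp'
      simp only [Finset.mem_map, Function.Embedding.coeFn_mk] at hp hp'
      obtain ⟨px, _, rfl⟩ := hp
      obtain ⟨py, hpy, hp'⟩ := hp'
      cases hp'
      simp at hxy
    have hterm : ∀ w : G.neighborSet u,
        (∑ p ∈ (G.finsetWalkLength k (w : V) v).map
            ⟨fun p => Walk.cons w.property p, fun a b h => by injection h⟩, walkGain φ p)
          = φ u w * (gainAdj G φ ^ k) w v := by
      intro w
      rw [Finset.sum_map, ih, Finset.mul_sum]
      exact Finset.sum_congr rfl fun p _ => walkGain_cons w.property p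
    rw [Finset.sum_congr rfl fun w _ => hterm w]
    have hite : ∀ w : V, gainAdj G φ u w * (gainAdj G φ ^ k) w v
        = if G.Adj u w then φ u w * (gainAdj G φ ^ k) w v else 0 := by
      intro w
      by_cases h : G.Adj u w <;> simp [gainAdj, h]
    rw [Finset.sum_congr rfl fun w _ => hite w, ← Finset.sum_filter]
    exact Finset.sum_subtype _ (by simp [mem_neighborSet]) _

lemma trace_pow_eq {m : Type*} [Fintype m] [DecidableEq m]
    {A : Matrix m m ℂ} (hA : A.IsHermitian) (k : ℕ) :
    (A ^ k).trace = ∑ i, ((hA.eigenvalues i : ℝ) : ℂ) ^ k := by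
  set U : Matrix m m ℂ := (hA.eigenvectorUnitary : Matrix m m ℂ) with hUdef
  set D : Matrix m m ℂ := Matrix.diagonal (RCLike.ofReal ∘ hA.eigenvalues) with hDdef
  have hU1 : U * star U = 1 := Matrix.mem_unitaryGroup_iff.mp hA.eigenvectorUnitary.2
  have hU2 : star U * U = 1 := Matrix.mem_unitaryGroup_iff'.mp hA.eigenvectorUnitary.2
  have hcancel : ∀ X : Matrix m m ℂ, star U * (U * X) = X := fun X => by
    rw [← Matrix.mul_assoc, hU2, Matrix.one_mul]
  have key : ∀ j : ℕ, A ^ j = U * D ^ j * star U := by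
    intro j
    induction j with
    | zero => simp [pow_zero, Matrix.mul_one, hU1]
    | succ j ihj =>
      rw [pow_succ, ihj, hA.spectral_theorem, pow_succ]
      simp only [Unitary.conjStarAlgAut_apply, Matrix.mul_assoc, ← hUdef, ← hDdef]
      rw [hcancel]
  rw [key k, Matrix.trace_mul_cycle, hU2, Matrix.one_mul,
    hDdef, Matrix.diagonal_pow, Matrix.trace_diagonal]
  simp [Pi.pow_apply]

lemma isCycle_of_minimal_odd {G : SimpleGraph V} {v : V} (p : G.Walk v v) (hodd : Odd p.length)
    (hmin : ∀ (u : V) (q : G.Walk u u), Odd q.length → p.length ≤ q.length) : p.IsCycle := by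
  classical
  by_cases hnd : p.support.tail.Nodup
  · cases p with
    | nil => simp [Nat.odd_iff] at hodd
    | @cons _ w _ hadj q =>
      rw [Walk.cons_isCycle_iff]
      have hq : q.support.Nodup := by simpa [Walk.support_cons] using hnd
      refine ⟨Walk.IsPath.mk' hq, ?_⟩
      intro he
      cases q with
      | nil => exact G.loopless.irrefl _ hadj
      | @cons _ x _ hadj2 r =>
        rw [Walk.edges_cons, List.mem_cons] at he
        rcases he with he | he
        · have hvx : v = x := by
            rcases Sym2.eq_iff.mp he with ⟨h1, _⟩ | ⟨h1, _⟩
            · exact absurd h1 hadj.ne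
            · exact h1
          subst hvx
          cases r with
          | nil => simp [Nat.odd_iff] at hodd
          | @cons _ y _ h3 s =>
            have hnodup := hq
            rw [Walk.support_cons, List.nodup_cons] at hnodup
            have hr := hnodup.2
            rw [Walk.support_cons, List.nodup_cons] at hr
            exact hr.1 s.end_mem_support
        · rw [Sym2.eq_swap] at he
          have hw : w ∈ r.support := r.fst_mem_support_of_mem_edges he
          rw [Walk.support_cons, List.nodup_cons] at hq
          exact hq.1 hw
  · exfalso
    obtain ⟨x, hxdup⟩ := List.exists_duplicate_iff_not_nodup.mpr hnd
    have hxcount : 2 ≤ p.support.tail.count x := List.duplicate_iff_two_le_count.mp hxdup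
    have hxmem : x ∈ p.support := List.mem_of_mem_tail hxdup.mem
    have hclen : (p.rotate x hxmem).length = p.length := by
      have h1 := congrArg Walk.length (p.take_spec hxmem)
      rw [Walk.length_append] at h1
      unfold Walk.rotate
      rw [Walk.length_append]
      omega
    have hccount : 2 ≤ (p.rotate x hxmem).support.tail.count x := by
      rw [(Walk.support_rotate p x hxmem).perm.count_eq]
      exact hxcount
    cases hceq : p.rotate x hxmem with
    | nil =>
      rw [hceq] at hccount
      simp at hccount
    | @cons _ y _ hadj d =>
      rw [hceq, Walk.support_cons] at hccount
      simp only [List.tail_cons] at hccount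
      have hxd : x ∈ d.support := by
        have : 0 < d.support.count x := by omega
        exact List.count_pos_iff.mp this
      set t := d.takeUntil x hxd with ht
      set s := d.dropUntil x hxd with hs
      have hspec : t.append s = d := d.take_spec hxd
      have hlen : t.length + s.length = d.length := by
        have := congrArg Walk.length hspec
        rwa [Walk.length_append] at this
      have hcount1 : t.support.count x = 1 := d.count_support_takeUntil_eq_one hxd
      have hcounts : 1 ≤ s.support.tail.count x := by
        have := congrArg (fun l => List.count x l) (congrArg Walk.support hspec)
        simp only [Walk.support_append, List.count_append] at this
        omega
      have hs1 : 1 ≤ s.length := by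
        by_contra h
        have hs0 : s.length = 0 := by omega
        have : s = Walk.nil := (Walk.length_eq_zero_iff.mp hs0).eq_nil
        rw [this] at hcounts
        simp at hcounts
      have hq1len : (Walk.cons hadj t).length = t.length + 1 := by
        simp [Walk.length_cons]
      have hsum : (Walk.cons hadj t).length + s.length = p.length := by
        have hd : d.length + 1 = p.length := by
          have := congrArg Walk.length hceq
          rw [Walk.length_cons] at this
          omega
        omega
      by_cases hso : Odd s.length
      · have := hmin x s hso
        omega
      · have hqo : Odd (Walk.cons hadj t).length := by
          rw [Nat.odd_iff] at hso hodd ⊢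
          omega
        have := hmin x (Walk.cons hadj t) hqo
        omega

lemma colorable_two_of_no_odd_closed_walk (G : SimpleGraph V)
    (h : ∀ (v : V) (p : G.Walk v v), ¬ Odd p.length) : G.Colorable 2 := by
  classical
  let rep : V → V := fun x => Quot.out (G.connectedComponentMk x)
  have hreach : ∀ x : V, G.Reachable x (rep x) := by
    intro x
    have : G.connectedComponentMk (rep x) = G.connectedComponentMk x :=
      Quot.out_eq (G.connectedComponentMk x)
    exact (ConnectedComponent.exact this).symm
  let col : V → Bool := fun x => decide (Odd (G.dist x (rep x)))
  have valid : ∀ {a b : V}, G.Adj a b → col a ≠ col b := by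
    intro a b hab
    have hr : rep a = rep b :=
      congrArg Quot.out (ConnectedComponent.connectedComponentMk_eq_of_adj hab)
    obtain ⟨pa, hpa⟩ := (hreach a).exists_walk_length_eq_dist
    obtain ⟨pb, hpb⟩ := (hreach b).exists_walk_length_eq_dist
    let pb' : G.Walk b (rep a) := pb.copy rfl hr.symm
    have hpb' : pb'.length = G.dist b (rep b) := by
      simpa [pb', Walk.length_copy] using hpb
    have hclosed := h a ((Walk.cons hab pb').append pa.reverse)
    rw [Walk.length_append, Walk.length_cons, Walk.length_reverse, hpa, hpb'] at hclosed
    simp only [col, ne_eq, decide_eq_decide]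
    rw [Nat.odd_iff, Nat.odd_iff]
    rw [Nat.odd_iff] at hclosed
    omega
  have C : G.Coloring Bool := Coloring.mk col fun hab => valid hab
  simpa using C.colorable

noncomputable instance cycleSubtypeFintype [Fintype V] [DecidableEq V]
    (G : SimpleGraph V) (i : ℕ) :
    Fintype {q : Σ' v : V, G.Walk v v // q.snd.IsCycle ∧ q.snd.length = i} := by
  apply Fintype.ofInjective
    (fun q => (⟨q.1.1, ⟨q.1.2, q.2.2⟩⟩ : Σ v : V, {p : G.Walk v v // p.length = i}))
  rintro ⟨⟨v, p⟩, hp⟩ ⟨⟨w, q⟩, hq⟩ h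
  obtain ⟨h1, h2⟩ := Sigma.ext_iff.mp h
  dsimp at h1 h2
  subst h1
  rw [heq_iff_eq, Subtype.mk.injEq] at h2
  subst h2
  rfl

end Aux

/-- Suppose the eigenvalues of `A(Φ)` are symmetric about `0`. If for every
odd `i` the sum `Σ_{C ∈ C_i(G)} Re(φ(C))` is nonzero whenever `G` has a cycle of length `i`,
then `G` is bipartite. -/
theorem symmetric_spectrum_bipartite {n : ℕ} (G : SimpleGraph (Fin n))
    (φ : Fin n → Fin n → ℂ) (hφ : IsGain G φ) (hA : (gainAdj G φ).IsHermitian)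
    (hsym : Finset.univ.val.map hA.eigenvalues =
      Finset.univ.val.map (fun i => -hA.eigenvalues i))
    (hcyc : ∀ i : ℕ, Odd i →
      (∃ q : Σ' v : Fin n, G.Walk v v, q.snd.IsCycle ∧ q.snd.length = i) →
      cycleRSum G φ i ≠ 0) :
    G.Colorable 2 := by
  classical
  apply colorable_two_of_no_odd_closed_walk
  intro v p hodd
  -- take the minimal odd length of a closed walk
  have hex : ∃ k : ℕ, Odd k ∧ ∃ (u : Fin n) (q : G.Walk u u), q.length = k :=
    ⟨p.length, hodd, v, p, rfl⟩
  set g := Nat.find hex with hgdef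
  obtain ⟨hgodd, u0, q0, hq0len⟩ := Nat.find_spec hex
  have hminall : ∀ (u : Fin n) (q : G.Walk u u), Odd q.length → g ≤ q.length := by
    intro u q hq
    by_contra hlt
    exact Nat.find_min hex (by omega) ⟨hq, u, q, rfl⟩
  have hq0min : ∀ (u : Fin n) (q : G.Walk u u), Odd q.length → q0.length ≤ q.length := by
    intro u q hq
    rw [hq0len]
    exact hminall u q hq
  have hq0odd : Odd q0.length := hq0len ▸ hgodd
  have hq0cyc : q0.IsCycle := isCycle_of_minimal_odd q0 hq0odd hq0min
  -- every closed walk of length g is a cycle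
  have hallcyc : ∀ (u : Fin n) (q : G.Walk u u), q.length = g → q.IsCycle := by
    intro u q hql
    refine isCycle_of_minimal_odd q (hql ▸ hgodd) ?_
    intro w r hr
    rw [hql]
    exact hminall w r hr
  -- the eigenvalue power sum vanishes
  have hg0 : (0 : ℕ) < g := by
    rcases hgodd with ⟨m, hm⟩
    omega
  have hpowsum : (∑ i, hA.eigenvalues i ^ g) = 0 := by
    have hmap := congrArg (fun m : Multiset ℝ => (m.map (fun x : ℝ => x ^ g)).sum) hsym
    simp only [Multiset.map_map, Function.comp] at hmap
    have h1 : (∑ i, hA.eigenvalues i ^ g) = (∑ i, (-hA.eigenvalues i) ^ g) := hmap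
    rw [Finset.sum_congr rfl (fun i _ => hgodd.neg_pow (hA.eigenvalues i))] at h1
    rw [Finset.sum_neg_distrib] at h1
    linarith
  have htrace0 : (gainAdj G φ ^ g).trace = 0 := by
    rw [trace_pow_eq hA g]
    have : (∑ i, ((hA.eigenvalues i : ℝ) : ℂ) ^ g) = ((∑ i, hA.eigenvalues i ^ g : ℝ) : ℂ) := by
      push_cast
      rfl
    rw [this, hpowsum]
    simp
  -- the trace equals the sum of gains over rooted oriented cycles of length g
  set T := {q : Σ' v : Fin n, G.Walk v v // q.snd.IsCycle ∧ q.snd.length = g} with hT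
  have htrsum : (gainAdj G φ ^ g).trace = ∑ q : T, walkGain φ q.1.snd := by
    rw [Matrix.trace]
    have hdiag : ∀ u : Fin n, (gainAdj G φ ^ g).diag u
        = ∑ p ∈ G.finsetWalkLength g u u, walkGain φ p := fun u =>
      gainAdj_pow_apply G φ g u u
    rw [Finset.sum_congr rfl fun u _ => hdiag u]
    have e := Finset.sum_sigma (Finset.univ : Finset (Fin n))
      (fun u => G.finsetWalkLength g u u)
      (fun x : Σ u : Fin n, G.Walk u u => walkGain φ x.snd)
    rw [← e]
    refine (Finset.sum_bij'
      (fun (x : Σ u : Fin n, G.Walk u u)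
          (hx : x ∈ (Finset.univ : Finset (Fin n)).sigma
            (fun u => G.finsetWalkLength g u u)) =>
        (⟨⟨x.1, x.2⟩,
          hallcyc x.1 x.2
            (SimpleGraph.mem_finsetWalkLength_iff.mp (Finset.mem_sigma.mp hx).2),
          SimpleGraph.mem_finsetWalkLength_iff.mp (Finset.mem_sigma.mp hx).2⟩ : T))
      (fun (q : T) _ => ⟨q.1.1, q.1.2⟩) ?_ ?_ ?_ ?_ ?_)
    · intro a ha
      exact Finset.mem_univ _
    · intro q hq
      rw [Finset.mem_sigma]
      exact ⟨Finset.mem_univ _, SimpleGraph.mem_finsetWalkLength_iff.mpr q.2.2⟩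
    · intro a ha
      rfl
    · intro q hq
      rfl
    · intro a ha
      rfl
  -- hence the cycle sum is zero, contradiction
  have hfin : (∑ᶠ q : T, (walkGain φ q.1.snd).re) = 0 := by
    rw [finsum_eq_sum_of_fintype]
    have : (∑ q : T, (walkGain φ q.1.snd).re) = (∑ q : T, walkGain φ q.1.snd).re := by
      rw [Complex.re_sum]
    rw [this, ← htrsum, htrace0]
    simp
  have : cycleRSum G φ g = 0 := by
    rw [cycleRSum, hfin, zero_div]
  exact hcyc g hgodd ⟨⟨u0, q0⟩, hq0cyc, hq0len⟩ this
end

section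
/- Let Φ = (G, φ) be a connected T-gain graph. Then ρ(A(Φ)) = ρ(A(G)) if and only if Φ is balanced or -Φ is balanced, where -Φ denotes the gain graph with gain function -φ. -/
open scoped Classical

variable {V : Type*}

noncomputable def Complex.abs : AbsoluteValue ℂ ℝ := IsAbsoluteValue.toAbsoluteValue (norm : ℂ → ℝ)

lemma Complex.norm_eq_abs (z : ℂ) : ‖z‖ = Complex.abs z := rfl

lemma Complex.abs_ofReal (r : ℝ) : Complex.abs (r : ℂ) = |r| := by
  change ‖(r : ℂ)‖ = |r|; simp

lemma Complex.abs_conj (z : ℂ) : Complex.abs (starRingEnd ℂ z) = Complex.abs z := by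
  change ‖(starRingEnd ℂ z)‖ = ‖z‖; simp

lemma Complex.re_le_abs (z : ℂ) : z.re ≤ Complex.abs z := Complex.re_le_norm z

lemma Complex.sq_abs (z : ℂ) : Complex.abs z ^ 2 = Complex.normSq z := Complex.sq_norm z

lemma Complex.normSq_eq_abs (z : ℂ) : Complex.normSq z = Complex.abs z ^ 2 :=
  Complex.normSq_eq_norm_sq z


section Toolkit


noncomputable section

namespace SpecAux

variable {n : ℕ}

lemma withLp_equiv_eq (v : EuclideanSpace ℂ (Fin n)) :
    (WithLp.equiv 2 (Fin n → ℂ)) v = ⇑v := rfl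

lemma withLp_symm_eq (v : Fin n → ℂ) :
    ⇑((WithLp.equiv 2 (Fin n → ℂ)).symm v) = v := rfl

/-- quadratic form expansion -/
lemma quadForm_eq {M : Matrix (Fin n) (Fin n) ℂ} (hM : M.IsHermitian) (x : Fin n → ℂ) :
    dotProduct (star x) (M.mulVec x) =
      ((∑ i, hM.eigenvalues i * ‖(inner ℂ (hM.eigenvectorBasis i)
        ((WithLp.equiv 2 _).symm x) : ℂ)‖ ^ 2 : ℝ) : ℂ) := by
  have key : ∀ i, (inner ℂ (hM.eigenvectorBasis i)
      ((WithLp.equiv 2 (Fin n → ℂ)).symm (M.mulVec x)) : ℂ)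
      = (hM.eigenvalues i : ℂ) * inner ℂ (hM.eigenvectorBasis i) ((WithLp.equiv 2 _).symm x) := by
    intro i
    change dotProduct (M.mulVec x) (star ⇑(hM.eigenvectorBasis i))
      = (hM.eigenvalues i : ℂ) * dotProduct x (star ⇑(hM.eigenvectorBasis i))
    rw [dotProduct_comm, dotProduct_comm x]
    rw [Matrix.dotProduct_mulVec]
    have h1 : Matrix.vecMul (star (⇑(hM.eigenvectorBasis i))) M
        = star (M.conjTranspose.mulVec (⇑(hM.eigenvectorBasis i))) := by
      rw [Matrix.star_mulVec, Matrix.conjTranspose_conjTranspose]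
    rw [h1, hM.eq, hM.mulVec_eigenvectorBasis]
    have h2 : star ((hM.eigenvalues i : ℝ) • ⇑(hM.eigenvectorBasis i))
        = (hM.eigenvalues i : ℂ) • star (⇑(hM.eigenvectorBasis i)) := by
      rw [star_smul]; norm_num
    rw [h2, smul_dotProduct]
    rfl
  have main := (hM.eigenvectorBasis).sum_inner_mul_inner
      ((WithLp.equiv 2 (Fin n → ℂ)).symm x) ((WithLp.equiv 2 (Fin n → ℂ)).symm (M.mulVec x))
  have lhs : dotProduct (star x) (M.mulVec x)
      = (inner ℂ ((WithLp.equiv 2 (Fin n → ℂ)).symm x)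
          ((WithLp.equiv 2 (Fin n → ℂ)).symm (M.mulVec x)) : ℂ) :=
    by rw [dotProduct_comm]; rfl
  rw [lhs, ← main]
  push_cast
  congr 1
  funext i
  rw [key i, ← inner_conj_symm ((WithLp.equiv 2 (Fin n → ℂ)).symm x) (hM.eigenvectorBasis i)]
  set c : ℂ := inner ℂ (hM.eigenvectorBasis i) ((WithLp.equiv 2 (Fin n → ℂ)).symm x)
  have : (starRingEnd ℂ) c * c = (‖c‖ : ℂ) ^ 2 := RCLike.conj_mul c
  calc (starRingEnd ℂ) c * ((hM.eigenvalues i : ℂ) * c)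
      = (hM.eigenvalues i : ℂ) * ((starRingEnd ℂ) c * c) := by ring
    _ = (hM.eigenvalues i : ℂ) * (‖c‖ : ℂ) ^ 2 := by rw [this]

end SpecAux

namespace SpecAux2
open SpecAux

variable {n : ℕ}

def nsq (x : Fin n → ℂ) : ℝ := ∑ i, ‖x i‖ ^ 2

lemma nsq_nonneg (x : Fin n → ℂ) : 0 ≤ nsq x :=
  Finset.sum_nonneg fun i _ => sq_nonneg _

lemma parseval (b : OrthonormalBasis (Fin n) ℂ (EuclideanSpace ℂ (Fin n))) (x : Fin n → ℂ) :
    ∑ i, ‖(inner ℂ (b i) ((WithLp.equiv 2 (Fin n → ℂ)).symm x) : ℂ)‖ ^ 2 = nsq x := by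
  have main := b.sum_inner_mul_inner ((WithLp.equiv 2 (Fin n → ℂ)).symm x)
    ((WithLp.equiv 2 (Fin n → ℂ)).symm x)
  have h1 : (inner ℂ ((WithLp.equiv 2 (Fin n → ℂ)).symm x)
      ((WithLp.equiv 2 (Fin n → ℂ)).symm x) : ℂ) = ((nsq x : ℝ) : ℂ) := by
    change dotProduct x (star x) = _
    rw [dotProduct_comm]
    unfold dotProduct nsq
    push_cast
    apply Finset.sum_congr rfl
    intro i _
    exact (RCLike.conj_mul (x i)).trans (by norm_num)
  have h2 : ∀ i, (inner ℂ ((WithLp.equiv 2 (Fin n → ℂ)).symm x) (b i) : ℂ) *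
      (inner ℂ (b i) ((WithLp.equiv 2 (Fin n → ℂ)).symm x) : ℂ)
      = ((‖(inner ℂ (b i) ((WithLp.equiv 2 (Fin n → ℂ)).symm x) : ℂ)‖ ^ 2 : ℝ) : ℂ) := by
    intro i
    rw [← inner_conj_symm ((WithLp.equiv 2 (Fin n → ℂ)).symm x) (b i)]
    exact (RCLike.conj_mul _).trans (by norm_num)
  rw [Finset.sum_congr rfl (fun i _ => h2 i), h1] at main
  exact_mod_cast main

variable [NeZero n]

lemma exists_rad {M : Matrix (Fin n) (Fin n) ℂ} (hM : M.IsHermitian) :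
    ∃ k, (⨆ i, |hM.eigenvalues i|) = |hM.eigenvalues k| := by
  obtain ⟨k, -, hk⟩ := Finset.exists_max_image Finset.univ (fun i => |hM.eigenvalues i|)
    ⟨⟨0, Nat.pos_of_ne_zero (NeZero.ne n)⟩, Finset.mem_univ _⟩
  refine ⟨k, le_antisymm (ciSup_le fun i => hk i (Finset.mem_univ i)) ?_⟩
  exact le_ciSup (f := fun i => |hM.eigenvalues i|)
    (Set.Finite.bddAbove (Set.finite_range _)) k

lemma abs_le_rad {M : Matrix (Fin n) (Fin n) ℂ} (hM : M.IsHermitian) (i : Fin n) :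
    |hM.eigenvalues i| ≤ ⨆ i, |hM.eigenvalues i| :=
  le_ciSup (f := fun i => |hM.eigenvalues i|)
    (Set.Finite.bddAbove (Set.finite_range _)) i

lemma rad_nonneg {M : Matrix (Fin n) (Fin n) ℂ} (hM : M.IsHermitian) :
    0 ≤ ⨆ i, |hM.eigenvalues i| :=
  le_trans (abs_nonneg _) (abs_le_rad hM ⟨0, Nat.pos_of_ne_zero (NeZero.ne n)⟩)

/-- upper bound for quadratic form -/
lemma quad_abs_le {M : Matrix (Fin n) (Fin n) ℂ} (hM : M.IsHermitian) (x : Fin n → ℂ) :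
    Complex.abs (dotProduct (star x) (M.mulVec x)) ≤ (⨆ i, |hM.eigenvalues i|) * nsq x := by
  rw [quadForm_eq hM x]
  rw [Complex.abs_ofReal]
  calc |∑ i, hM.eigenvalues i * ‖(inner ℂ (hM.eigenvectorBasis i)
        ((WithLp.equiv 2 (Fin n → ℂ)).symm x) : ℂ)‖ ^ 2|
      ≤ ∑ i, |hM.eigenvalues i * ‖(inner ℂ (hM.eigenvectorBasis i)
        ((WithLp.equiv 2 (Fin n → ℂ)).symm x) : ℂ)‖ ^ 2| := Finset.abs_sum_le_sum_abs _ _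
    _ ≤ ∑ i, (⨆ i, |hM.eigenvalues i|) * ‖(inner ℂ (hM.eigenvectorBasis i)
        ((WithLp.equiv 2 (Fin n → ℂ)).symm x) : ℂ)‖ ^ 2 := by
        refine Finset.sum_le_sum fun i _ => ?_
        rw [abs_mul, abs_of_nonneg (sq_nonneg (‖(inner ℂ (hM.eigenvectorBasis i)
          ((WithLp.equiv 2 (Fin n → ℂ)).symm x) : ℂ)‖))]
        exact mul_le_mul_of_nonneg_right (abs_le_rad hM i) (sq_nonneg _)
    _ = (⨆ i, |hM.eigenvalues i|) * nsq x := by rw [← Finset.mul_sum, parseval]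

/-- the radius is attained by a unit eigenvector -/
lemma nsq_basis {M : Matrix (Fin n) (Fin n) ℂ} (hM : M.IsHermitian) (k : Fin n) :
    nsq ⇑(hM.eigenvectorBasis k) = 1 := by
  have h1 : ‖hM.eigenvectorBasis k‖ = 1 := hM.eigenvectorBasis.orthonormal.1 k
  have h2 := EuclideanSpace.norm_eq (hM.eigenvectorBasis k)
  rw [h1] at h2
  exact Real.sqrt_eq_one.mp h2.symm

lemma dot_star_self (x : Fin n → ℂ) :
    dotProduct (star x) x = ((nsq x : ℝ) : ℂ) := by
  unfold dotProduct nsq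
  push_cast
  apply Finset.sum_congr rfl
  intro i _
  exact (RCLike.conj_mul _).trans (by norm_num)

/-- the radius is attained by a unit eigenvector -/
lemma rad_attained {M : Matrix (Fin n) (Fin n) ℂ} (hM : M.IsHermitian) :
    ∃ x : Fin n → ℂ, nsq x = 1 ∧
      Complex.abs (dotProduct (star x) (M.mulVec x)) = ⨆ i, |hM.eigenvalues i| := by
  obtain ⟨k, hk⟩ := exists_rad hM
  refine ⟨⇑(hM.eigenvectorBasis k), nsq_basis hM k, ?_⟩
  rw [hM.mulVec_eigenvectorBasis, hk]
  have h3 : dotProduct (star ⇑(hM.eigenvectorBasis k))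
      (hM.eigenvalues k • ⇑(hM.eigenvectorBasis k))
      = (hM.eigenvalues k : ℂ) := by
    rw [dotProduct_smul]
    rw [show (hM.eigenvalues k • dotProduct (star ⇑(hM.eigenvectorBasis k))
      ⇑(hM.eigenvectorBasis k)) = ((hM.eigenvalues k : ℂ) *
      dotProduct (star ⇑(hM.eigenvectorBasis k)) ⇑(hM.eigenvectorBasis k)) from by
        rw [Complex.real_smul]]
    rw [dot_star_self, nsq_basis hM k]
    norm_num
  rw [h3]
  exact Complex.abs_ofReal _

lemma rad_le_of_bound {M : Matrix (Fin n) (Fin n) ℂ} (hM : M.IsHermitian) {c : ℝ}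
    (h : ∀ x : Fin n → ℂ, Complex.abs (dotProduct (star x) (M.mulVec x)) ≤ c * nsq x) :
    (⨆ i, |hM.eigenvalues i|) ≤ c := by
  obtain ⟨x, hx1, hx2⟩ := rad_attained hM
  calc (⨆ i, |hM.eigenvalues i|) = _ := hx2.symm
    _ ≤ c * nsq x := h x
    _ = c := by rw [hx1, mul_one]

end SpecAux2

namespace SpecAux3
open SpecAux SpecAux2

variable {n : ℕ} [NeZero n]

/-- Equality case: if the quadratic form attains `ρ · ‖x‖²` then `x` is a `ρ`-eigenvector. -/
lemma eigen_of_quad_eq {M : Matrix (Fin n) (Fin n) ℂ} (hM : M.IsHermitian) (x : Fin n → ℂ)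
    (h : dotProduct (star x) (M.mulVec x) = (((⨆ i, |hM.eigenvalues i|) * nsq x : ℝ) : ℂ)) :
    M.mulVec x = ((⨆ i, |hM.eigenvalues i| : ℝ) : ℂ) • x := by
  set ρ : ℝ := ⨆ i, |hM.eigenvalues i| with hρ
  set b := hM.eigenvectorBasis with hb
  set xE : EuclideanSpace ℂ (Fin n) := (WithLp.equiv 2 (Fin n → ℂ)).symm x with hxE
  -- coefficients
  have hsum : ∑ i, hM.eigenvalues i * ‖(inner ℂ (b i) xE : ℂ)‖ ^ 2 = ρ * nsq x := by
    have := (quadForm_eq hM x).symm.trans h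
    exact_mod_cast this
  have hpar : ∑ i, ‖(inner ℂ (b i) xE : ℂ)‖ ^ 2 = nsq x := parseval b x
  have hzero : ∑ i, (ρ - hM.eigenvalues i) * ‖(inner ℂ (b i) xE : ℂ)‖ ^ 2 = 0 := by
    simp only [sub_mul, Finset.sum_sub_distrib, hsum, ← Finset.mul_sum, hpar, sub_self]
  have hterm : ∀ i ∈ Finset.univ, 0 ≤ (ρ - hM.eigenvalues i) * ‖(inner ℂ (b i) xE : ℂ)‖ ^ 2 := by
    intro i _
    apply mul_nonneg _ (sq_nonneg _)
    have := abs_le_rad hM i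
    rw [abs_le] at this
    linarith [this.2]
  have hall := (Finset.sum_eq_zero_iff_of_nonneg hterm).mp hzero
  -- each coefficient satisfies λ_i c_i = ρ c_i
  have hcoef : ∀ i, (hM.eigenvalues i : ℂ) * (inner ℂ (b i) xE : ℂ)
      = (ρ : ℂ) * (inner ℂ (b i) xE : ℂ) := by
    intro i
    rcases eq_or_ne (hM.eigenvalues i) ρ with he | he
    · rw [he]
    · have h0 := hall i (Finset.mem_univ i)
      have : ‖(inner ℂ (b i) xE : ℂ)‖ ^ 2 = 0 := by
        rcases mul_eq_zero.mp h0 with h' | h'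
        · exact absurd (by linarith [sub_eq_zero.mp h']) he
        · exact h'
      have hc0 : (inner ℂ (b i) xE : ℂ) = 0 := by
        rwa [pow_eq_zero_iff (by norm_num), norm_eq_zero] at this
      rw [hc0, mul_zero, mul_zero]
  -- inner products with M x agree with those of ρ x
  have key : ∀ i, (inner ℂ (b i) ((WithLp.equiv 2 (Fin n → ℂ)).symm (M.mulVec x)) : ℂ)
      = (inner ℂ (b i) ((ρ : ℂ) • xE) : ℂ) := by
    intro i
    have h1 : (inner ℂ (b i) ((WithLp.equiv 2 (Fin n → ℂ)).symm (M.mulVec x)) : ℂ)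
        = (hM.eigenvalues i : ℂ) * (inner ℂ (b i) xE : ℂ) := by
      change dotProduct (M.mulVec x) (star ((WithLp.equiv 2 (Fin n → ℂ)) (b i)))
        = (hM.eigenvalues i : ℂ) * dotProduct ((WithLp.equiv 2 (Fin n → ℂ)) xE)
          (star ((WithLp.equiv 2 (Fin n → ℂ)) (b i)))
      rw [dotProduct_comm, dotProduct_comm ((WithLp.equiv 2 (Fin n → ℂ)) xE)]
      rw [Matrix.dotProduct_mulVec]
      have h2 : Matrix.vecMul (star ((WithLp.equiv 2 (Fin n → ℂ)) (b i))) M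
          = star (M.conjTranspose.mulVec (⇑(b i))) := by
        rw [Matrix.star_mulVec, Matrix.conjTranspose_conjTranspose]; rfl
      rw [h2, hM.eq, hM.mulVec_eigenvectorBasis]
      have h3 : star ((hM.eigenvalues i : ℝ) • ⇑(b i))
          = (hM.eigenvalues i : ℂ) • star (⇑(b i)) := by
        rw [star_smul]; norm_num
      rw [h3, smul_dotProduct]
      rfl
    rw [h1, hcoef i, inner_smul_right]
  have veq : (WithLp.equiv 2 (Fin n → ℂ)).symm (M.mulVec x) = (ρ : ℂ) • xE := by
    rw [← b.sum_repr' ((WithLp.equiv 2 (Fin n → ℂ)).symm (M.mulVec x)),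
      ← b.sum_repr' ((ρ : ℂ) • xE)]
    exact Finset.sum_congr rfl fun i _ => by rw [key i]
  have := congrArg (WithLp.equiv 2 (Fin n → ℂ)) veq
  rw [Equiv.apply_symm_apply] at this
  rw [this]
  rfl


end SpecAux3




namespace GainAux

open SimpleGraph Walk

variable {V : Type*} {G : SimpleGraph V} (φ : V → V → ℂ)

@[simp] lemma gain_nil {u : V} : walkGain φ (Walk.nil : G.Walk u u) = 1 := rfl

@[simp] lemma gain_cons {u v w : V} (h : G.Adj u v) (p : G.Walk v w) :
    walkGain φ (Walk.cons h p) = φ u v * walkGain φ p := by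
  simp [walkGain, Walk.darts_cons]

@[simp] lemma gain_append {u v w : V} (p : G.Walk u v) (q : G.Walk v w) :
    walkGain φ (p.append q) = walkGain φ p * walkGain φ q := by
  simp [walkGain, Walk.darts_append]

variable {φ}

lemma gain_ne_zero (hφ : ∀ i j, G.Adj i j → φ i j * φ j i = 1) {u v : V} (p : G.Walk u v) :
    walkGain φ p ≠ 0 := by
  induction p with
  | nil => simp
  | cons h q ih =>
    rw [gain_cons]
    exact mul_ne_zero (fun h0 => by simpa [h0] using hφ _ _ h) ih

lemma gain_reverse (hφ : ∀ i j, G.Adj i j → φ i j * φ j i = 1) {u v : V} (p : G.Walk u v) :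
    walkGain φ p.reverse * walkGain φ p = 1 := by
  induction p with
  | nil => simp
  | @cons a b c h q ih =>
    rw [Walk.reverse_cons, gain_append, gain_cons, gain_cons, gain_nil]
    calc walkGain φ q.reverse * (φ b a * 1) * (φ a b * walkGain φ q)
        = (walkGain φ q.reverse * walkGain φ q) * (φ b a * φ a b) := by ring
      _ = 1 := by rw [ih, one_mul, hφ _ _ h.symm]

lemma gain_abs (hφ : ∀ i j, G.Adj i j → Complex.abs (φ i j) = 1) {u v : V} (p : G.Walk u v) :
    Complex.abs (walkGain φ p) = 1 := by
  induction p with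
  | nil => simp
  | cons h q ih => rw [gain_cons, map_mul, ih, hφ _ _ h, one_mul]

lemma gain_neg {u v : V} (p : G.Walk u v) :
    walkGain (fun i j => -φ i j) p = (-1 : ℂ) ^ p.length * walkGain φ p := by
  induction p with
  | nil => simp
  | cons h q ih =>
    rw [gain_cons, gain_cons, ih, Walk.length_cons, pow_succ]
    ring

lemma gain_telescope {ε : ℂ} {D : V → ℂ} (hD : ∀ v, D v ≠ 0)
    (hφD : ∀ i j, G.Adj i j → φ i j = ε * D i * (D j)⁻¹) {u v : V} (p : G.Walk u v) :
    walkGain φ p = ε ^ p.length * D u * (D v)⁻¹ := by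
  induction p with
  | nil => simp [hD]
  | @cons a b c h q ih =>
    rw [gain_cons, ih, hφD _ _ h, Walk.length_cons, pow_succ]
    have hb := hD b
    have hc := hD c
    field_simp

lemma split_loop {w v : V} [DecidableEq V] (d : G.Walk w v) (hwt : w ∈ d.support.tail) :
    ∃ (q2 : G.Walk w w) (q3 : G.Walk w v), d = q2.append q3 ∧ 0 < q2.length := by
  cases d with
  | nil => simp at hwt
  | @cons _ b _ hd d' =>
    have hw' : w ∈ d'.support := by simpa using hwt
    refine ⟨Walk.cons hd (d'.takeUntil w hw'), d'.dropUntil w hw', ?_, ?_⟩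
    · rw [Walk.cons_append, Walk.take_spec]
    · simp [Walk.length_cons]

lemma gain_closed [DecidableEq V] (hφ : ∀ i j, G.Adj i j → φ i j * φ j i = 1)
    (hbal : ∀ (v : V) (p : G.Walk v v), p.IsCycle → walkGain φ p = 1) :
    ∀ (N : ℕ) (v : V) (p : G.Walk v v), p.length ≤ N → walkGain φ p = 1 := by
  intro N
  induction N using Nat.strong_induction_on with
  | _ N IH =>
  intro v p hlen
  cases p with
  | nil => simp
  | @cons _ u _ h q =>
    -- h : G.Adj v u, q : G.Walk u v
    have hN1 : 1 ≤ N := le_trans (by simp [Walk.length_cons]) hlen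
    by_cases hnd : q.support.Nodup
    · -- q is a path
      have hqpath : q.IsPath := (Walk.isPath_def q).mpr hnd
      by_cases he : s(v, u) ∈ q.edges
      · -- the edge {v,u} occurs in q : then q is a single edge
        cases q with
        | nil => exact absurd h G.irrefl
        | @cons _ b _ h2 r =>
          -- h2 : G.Adj u b, r : G.Walk b v
          rw [Walk.edges_cons, List.mem_cons] at he
          rcases he with heq | hein
          · -- s(v,u) = s(u,b)
            rw [Sym2.eq_iff] at heq
            rcases heq with ⟨hvu, hub⟩ | ⟨hvb, huu⟩
            · exact absurd (hvu ▸ h) G.irrefl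
            · -- v = b (as hvb : v = u? careful) 
              subst hvb
              -- r : G.Walk v v and it is a path (sub of nodup)
              have hr : r.support.Nodup := by
                have := hnd
                rw [Walk.support_cons, List.nodup_cons] at this
                exact this.2
              have : r = Walk.nil := Walk.isPath_iff_eq_nil.mp ((Walk.isPath_def r).mpr hr)
              subst this
              simp only [gain_cons, gain_nil, mul_one]
              exact hφ v u h
          · -- s(v,u) ∈ r.edges gives u ∈ r.support, contradicting nodup
            have hmem : u ∈ r.support := Walk.snd_mem_support_of_mem_edges r hein
            rw [Walk.support_cons, List.nodup_cons] at hnd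
            exact absurd hmem hnd.1
      · -- it's a cycle
        have hcyc : (Walk.cons h q).IsCycle := by
          rw [Walk.cons_isCycle_iff]
          exact ⟨hqpath, he⟩
        exact hbal v _ hcyc
    · -- duplicate vertex in q.support
      obtain ⟨w, hw⟩ := List.exists_duplicate_iff_not_nodup.mpr hnd
      have hw1 : w ∈ q.support := hw.mem
      have hspec := q.take_spec hw1
      have hcount1 : (q.takeUntil w hw1).support.count w = 1 :=
        q.count_support_takeUntil_eq_one hw1
      have hc2 : 2 ≤ q.support.count w := List.duplicate_iff_two_le_count.mp hw
      have hsupp : q.support = (q.takeUntil w hw1).support ++ (q.dropUntil w hw1).support.tail := by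
        conv_lhs => rw [← hspec]
        exact Walk.support_append _ _
      have hwd : w ∈ (q.dropUntil w hw1).support.tail := by
        by_contra hcon
        have : q.support.count w = 1 := by
          rw [hsupp, List.count_append, hcount1, List.count_eq_zero_of_not_mem hcon]
        omega
      obtain ⟨q2, q3, hd, hq2len⟩ := split_loop (q.dropUntil w hw1) hwd
      -- q = q1.append (q2.append q3)
      have hq : q = (q.takeUntil w hw1).append (q2.append q3) := by rw [← hd, hspec]
      have hlenq : q.length = (q.takeUntil w hw1).length + q2.length + q3.length := by
        conv_lhs => rw [hq]
        simp [Walk.length_append]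
        ring
      have hplen : (Walk.cons h q).length = 1 + q.length := by simp [Walk.length_cons]; ring
      -- gain of q2 (shorter closed walk)
      have hg2 : walkGain φ q2 = 1 := by
        refine IH (N - 1) (by omega) w q2 ?_
        omega
      -- gain of the shortened closed walk
      have hg13 : walkGain φ (Walk.cons h ((q.takeUntil w hw1).append q3)) = 1 := by
        refine IH (N - 1) (by omega) v _ ?_
        simp only [Walk.length_cons, Walk.length_append]
        omega
      rw [gain_cons, gain_append] at hg13
      rw [gain_cons, hq, gain_append, gain_append]
      calc φ v u * (walkGain φ (q.takeUntil w hw1) * (walkGain φ q2 * walkGain φ q3))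
          = (φ v u * (walkGain φ (q.takeUntil w hw1) * walkGain φ q3)) * walkGain φ q2 := by
            ring
        _ = 1 := by rw [hg13, hg2, one_mul]

lemma gain_indep [DecidableEq V] (hφ : ∀ i j, G.Adj i j → φ i j * φ j i = 1)
    (hbal : ∀ (v : V) (p : G.Walk v v), p.IsCycle → walkGain φ p = 1)
    {a b : V} (p q : G.Walk a b) : walkGain φ p = walkGain φ q := by
  have h1 : walkGain φ (p.append q.reverse) = 1 :=
    gain_closed hφ hbal (p.append q.reverse).length a _ le_rfl
  rw [gain_append] at h1
  have h2 : walkGain φ q.reverse * walkGain φ q = 1 := gain_reverse hφ q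
  have hq0 : walkGain φ q.reverse ≠ 0 := gain_ne_zero hφ _
  calc walkGain φ p = walkGain φ p * (walkGain φ q.reverse * walkGain φ q) := by
        rw [h2, mul_one]
    _ = (walkGain φ p * walkGain φ q.reverse) * walkGain φ q := by ring
    _ = walkGain φ q := by rw [h1, one_mul]

lemma exists_switch [DecidableEq V] (hconn : G.Connected)
    (hφ1 : ∀ i j, G.Adj i j → Complex.abs (φ i j) = 1)
    (hφ2 : ∀ i j, G.Adj i j → φ i j * φ j i = 1)
    (hbal : ∀ (v : V) (p : G.Walk v v), p.IsCycle → walkGain φ p = 1) :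
    ∃ D : V → ℂ, (∀ v, Complex.abs (D v) = 1) ∧
      ∀ i j, G.Adj i j → φ i j = (D i)⁻¹ * D j := by
  obtain ⟨r⟩ := hconn.nonempty
  have hW : ∀ v, Nonempty (G.Walk r v) := fun v => hconn.preconnected r v
  refine ⟨fun v => walkGain φ (hW v).some, fun v => gain_abs hφ1 _, ?_⟩
  intro i j hij
  have key : walkGain φ (((hW i).some).append (Walk.cons hij Walk.nil))
      = walkGain φ (hW j).some := gain_indep hφ2 hbal _ _
  rw [gain_append, gain_cons, gain_nil, mul_one] at key
  have h0 : walkGain φ (hW i).some ≠ 0 := gain_ne_zero hφ2 _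
  field_simp
  linear_combination key

lemma re_eq_abs {z : ℂ} (h : z.re = Complex.abs z) : z = ((z.re : ℝ) : ℂ) := by
  have hnsq : Complex.normSq z = z.re * z.re + z.im * z.im := Complex.normSq_apply z
  have habs : Complex.abs z ^ 2 = Complex.normSq z := (Complex.sq_abs z)
  have h2 : z.re ^ 2 = Complex.normSq z := by rw [← habs, ← h]
  have him0 : z.im * z.im = 0 := by nlinarith
  have him : z.im = 0 := mul_self_eq_zero.mp him0
  exact Complex.ext (by simp) (by simp [him])

/-- Equality in the triangle inequality for finite sums of complex numbers. -/
lemma tri_eq {ι : Type*} [Fintype ι] {f : ι → ℂ}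
    (h : Complex.abs (∑ j, f j) = ∑ j, Complex.abs (f j)) (j : ι) :
    ((∑ k, Complex.abs (f k) : ℝ) : ℂ) * f j = (∑ k, f k) * ((Complex.abs (f j) : ℝ) : ℂ) := by
  set S : ℂ := ∑ k, f k with hS
  set T : ℝ := ∑ k, Complex.abs (f k) with hT
  rcases eq_or_ne T 0 with hT0 | hT0
  · have hnn : ∀ k ∈ (Finset.univ : Finset ι), 0 ≤ Complex.abs (f k) :=
      fun k _ => Complex.abs.nonneg _
    have hz : Complex.abs (f j) = 0 :=
      (Finset.sum_eq_zero_iff_of_nonneg hnn).mp hT0 j (Finset.mem_univ j)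
    have hfj : f j = 0 := by rwa [map_eq_zero] at hz
    rw [hfj, hT0]
    simp
  · -- main case
    have hsum : ∑ k, ((starRingEnd ℂ) S * f k).re = Complex.abs S * T := by
      have h1 : ∑ k, ((starRingEnd ℂ) S * f k).re = ((starRingEnd ℂ) S * S).re := by
        rw [← Complex.re_sum]
        congr 1
        rw [← Finset.mul_sum]
      rw [h1]
      have h2 : (starRingEnd ℂ) S * S = ((Complex.abs S ^ 2 : ℝ) : ℂ) := by
        rw [mul_comm, Complex.mul_conj, Complex.normSq_eq_abs]
      rw [h2, Complex.ofReal_re, h, hT]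
      ring
    have hle : ∀ k ∈ Finset.univ, ((starRingEnd ℂ) S * f k).re ≤ Complex.abs S * Complex.abs (f k) := by
      intro k _
      calc ((starRingEnd ℂ) S * f k).re ≤ Complex.abs ((starRingEnd ℂ) S * f k) := Complex.re_le_abs _
        _ = Complex.abs S * Complex.abs (f k) := by rw [map_mul, Complex.abs_conj]
    have heach : ((starRingEnd ℂ) S * f j).re = Complex.abs S * Complex.abs (f j) := by
      by_contra hne
      have hlt : ((starRingEnd ℂ) S * f j).re < Complex.abs S * Complex.abs (f j) :=
        lt_of_le_of_ne (hle j (Finset.mem_univ j)) hne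
      have : ∑ k, ((starRingEnd ℂ) S * f k).re < ∑ k, Complex.abs S * Complex.abs (f k) :=
        Finset.sum_lt_sum (fun k _ => hle k (Finset.mem_univ k)) ⟨j, Finset.mem_univ j, hlt⟩
      rw [hsum, ← Finset.mul_sum, ← hT] at this
      exact lt_irrefl _ this
    -- conclude conj S * f j is a nonneg real
    have habs : Complex.abs ((starRingEnd ℂ) S * f j) = Complex.abs S * Complex.abs (f j) := by
      rw [map_mul, Complex.abs_conj]
    have hre : ((starRingEnd ℂ) S * f j).re = Complex.abs ((starRingEnd ℂ) S * f j) := by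
      rw [habs, heach]
    have hzval : (starRingEnd ℂ) S * f j = ((Complex.abs S * Complex.abs (f j) : ℝ) : ℂ) := by
      rw [re_eq_abs hre, heach]
    -- multiply by S
    have hSz : (S : ℂ) * ((starRingEnd ℂ) S * f j) = S * ((Complex.abs S * Complex.abs (f j) : ℝ) : ℂ) := by
      rw [hzval]
    have hSS : S * (starRingEnd ℂ) S = ((Complex.abs S ^ 2 : ℝ) : ℂ) := by
      rw [Complex.mul_conj, Complex.normSq_eq_abs]
    have hST : Complex.abs S = T := h
    -- |S|^2 * f j = S * |S| * |f j|, and |S| = T ≠ 0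
    have hfinal : ((T^2 : ℝ) : ℂ) * f j = S * ((T * Complex.abs (f j) : ℝ) : ℂ) := by
      calc ((T^2 : ℝ) : ℂ) * f j = ((Complex.abs S ^ 2 : ℝ) : ℂ) * f j := by rw [hST]
        _ = S * (starRingEnd ℂ) S * f j := by rw [hSS]
        _ = S * ((starRingEnd ℂ) S * f j) := by ring
        _ = S * ((Complex.abs S * Complex.abs (f j) : ℝ) : ℂ) := hSz
        _ = S * ((T * Complex.abs (f j) : ℝ) : ℂ) := by rw [hST]
    have hTc : (T : ℂ) ≠ 0 := by exact_mod_cast hT0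
    push_cast at hfinal
    refine mul_left_cancel₀ hTc ?_
    linear_combination hfinal

end GainAux

end
end Toolkit


section MainAux
open SpecAux SpecAux2 SpecAux3 GainAux

variable {n : ℕ}

lemma gainAdj_neg (G : SimpleGraph (Fin n)) [DecidableRel G.Adj] (φ : Fin n → Fin n → ℂ) :
    gainAdj G (fun i j => -φ i j) = -(gainAdj G φ) := by
  funext i j
  simp only [gainAdj, Matrix.neg_apply]
  split_ifs <;> simp

lemma rad_neg [NeZero n] {M N : Matrix (Fin n) (Fin n) ℂ} (hM : M.IsHermitian)
    (hN : N.IsHermitian) (h : N = -M) :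
    (⨆ i, |hN.eigenvalues i|) = ⨆ i, |hM.eigenvalues i| := by
  have habs : ∀ x : Fin n → ℂ, Complex.abs (dotProduct (star x) (N.mulVec x))
      = Complex.abs (dotProduct (star x) (M.mulVec x)) := by
    intro x
    rw [h, Matrix.neg_mulVec, dotProduct_neg, map_neg_eq_map]
  refine le_antisymm ?_ ?_
  · refine rad_le_of_bound hN (fun x => ?_)
    rw [habs x]
    exact quad_abs_le hM x
  · refine rad_le_of_bound hM (fun x => ?_)
    rw [← habs x]
    exact quad_abs_le hN x

lemma rad_switch [NeZero n] (G : SimpleGraph (Fin n)) [DecidableRel G.Adj]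
    (φ : Fin n → Fin n → ℂ) (D : Fin n → ℂ)
    (hDabs : ∀ v, Complex.abs (D v) = 1)
    (hsw : ∀ i j, G.Adj i j → φ i j = (D i)⁻¹ * D j)
    (hA : (gainAdj G φ).IsHermitian) (hG : (G.adjMatrix ℂ).IsHermitian) :
    (⨆ i, |hA.eigenvalues i|) = ⨆ i, |hG.eigenvalues i| := by
  have hDne : ∀ v, D v ≠ 0 := fun v h0 => by simpa [h0] using hDabs v
  have hconj : ∀ v, (starRingEnd ℂ) (D v) = (D v)⁻¹ := fun v =>
    (RCLike.inv_eq_conj (by rw [Complex.norm_eq_abs]; exact hDabs v)).symm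
  have entry : ∀ i j, gainAdj G φ i j = (D i)⁻¹ * ((G.adjMatrix ℂ) i j * D j) := by
    intro i j
    by_cases hij : G.Adj i j
    · simp only [gainAdj, hij, if_true, SimpleGraph.adjMatrix_apply, hsw i j hij]
      ring
    · simp [gainAdj, SimpleGraph.adjMatrix_apply, hij]
  have quadt : ∀ x : Fin n → ℂ, dotProduct (star x) ((gainAdj G φ).mulVec x)
      = dotProduct (star (fun i => D i * x i))
        ((G.adjMatrix ℂ).mulVec (fun i => D i * x i)) := by
    intro x
    simp only [Matrix.mulVec, dotProduct, Pi.star_apply, RCLike.star_def,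
      Finset.mul_sum]
    apply Finset.sum_congr rfl; intro i _
    apply Finset.sum_congr rfl; intro j _
    rw [entry i j, map_mul, hconj i]
    ring
  have hnsq1 : ∀ x : Fin n → ℂ, nsq (fun i => D i * x i) = nsq x := by
    intro x
    simp [nsq, norm_mul, Complex.norm_eq_abs, hDabs]
  have hnsq2 : ∀ x : Fin n → ℂ, nsq (fun i => (D i)⁻¹ * x i) = nsq x := by
    intro x
    simp [nsq, norm_mul, norm_inv, Complex.norm_eq_abs, hDabs]
  refine le_antisymm ?_ ?_
  · refine rad_le_of_bound hA (fun x => ?_)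
    rw [quadt x, ← hnsq1 x]
    exact quad_abs_le hG _
  · refine rad_le_of_bound hG (fun x => ?_)
    have hxz : (fun i => D i * ((fun j => (D j)⁻¹ * x j) i)) = x := by
      funext i
      rw [← mul_assoc, mul_inv_cancel₀ (hDne i), one_mul]
    have hq := quadt (fun j => (D j)⁻¹ * x j)
    rw [hxz] at hq
    rw [← hq, ← hnsq2 x]
    exact quad_abs_le hA _

end MainAux

/-- For a connected `𝕋`-gain graph `Φ = (G, φ)`,
`ρ(A(Φ)) = ρ(A(G))` iff `Φ` is balanced or `-Φ` is balanced. -/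
theorem spectral_radius_eq_iff_balanced {n : ℕ} (G : SimpleGraph (Fin n))
    [DecidableRel G.Adj] (hconn : G.Connected)
    (φ : Fin n → Fin n → ℂ) (hφ : IsGain G φ)
    (hA : (gainAdj G φ).IsHermitian) (hG : (G.adjMatrix ℂ).IsHermitian) :
    (⨆ i, |hA.eigenvalues i|) = (⨆ i, |hG.eigenvalues i|) ↔
      IsBalanced G φ ∨ IsBalanced G (fun i j => -φ i j) := by
  haveI hne : Nonempty (Fin n) := hconn.nonempty
  haveI : NeZero n := ⟨(Fin.pos_iff_nonempty.mpr hne).ne'⟩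
  constructor
  · -- Forward direction
    intro heq
    set ρ : ℝ := ⨆ i, |hG.eigenvalues i| with hρdef
    obtain ⟨k, hk⟩ := SpecAux2.exists_rad hA
    set lam : ℝ := hA.eigenvalues k with hlam
    have hrlam : |lam| = ρ := by rw [← hk]; exact heq
    set x : Fin n → ℂ := ⇑(hA.eigenvectorBasis k) with hx
    have hxeig := hA.mulVec_eigenvectorBasis k
    have hxi : ∀ i, ((gainAdj G φ).mulVec x) i = (lam : ℂ) * x i := by
      intro i
      calc ((gainAdj G φ).mulVec x) i = (hA.eigenvalues k • x) i := by rw [hxeig]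
        _ = (lam : ℂ) * x i := by
            simp only [Pi.smul_apply, ← hlam, Complex.real_smul]
    have hnsqx : SpecAux2.nsq x = 1 := SpecAux2.nsq_basis hA k
    by_cases hρ0 : ρ = 0
    · -- no edges: vacuously balanced
      left
      have hev : ∀ i, hG.eigenvalues i = 0 := by
        intro i
        have h1 := SpecAux2.abs_le_rad hG i
        rw [← hρdef, hρ0] at h1
        have h2 := abs_nonneg (hG.eigenvalues i)
        exact abs_eq_zero.mp (le_antisymm h1 h2)
      have hGzero : G.adjMatrix ℂ = 0 := by
        have hdiag : Matrix.diagonal (RCLike.ofReal ∘ hG.eigenvalues)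
            = (0 : Matrix (Fin n) (Fin n) ℂ) := by
          funext i j
          simp [Matrix.diagonal, Function.comp, hev]
        have hst := hG.spectral_theorem
        rw [hdiag, map_zero] at hst
        exact hst
      intro v p hp
      exfalso
      cases p with
      | nil => exact hp.ne_nil rfl
      | @cons _ b _ h q =>
        have h1 : (G.adjMatrix ℂ) v b = 1 := by
          simp [SimpleGraph.adjMatrix_apply, h]
        rw [hGzero] at h1
        simpa using h1
    · have hρpos : 0 < ρ := lt_of_le_of_ne (SpecAux2.rad_nonneg hG) (Ne.symm hρ0)
      set y : Fin n → ℂ := fun i => ((Complex.abs (x i) : ℝ) : ℂ) with hy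
      have hynsq : SpecAux2.nsq y = 1 := by
        rw [← hnsqx]
        unfold SpecAux2.nsq
        refine Finset.sum_congr rfl fun i _ => ?_
        rw [hy]
        simp only [Complex.norm_eq_abs, Complex.abs_ofReal,
          abs_of_nonneg (Complex.abs.nonneg (x i))]
      have hmv : ∀ (M : Matrix (Fin n) (Fin n) ℂ) (z : Fin n → ℂ) (i : Fin n),
          (M.mulVec z) i = ∑ j, M i j * z j := fun M z i => rfl
      have hAterm : ∀ i j, ((G.adjMatrix ℂ) i j * y j).re
          = if G.Adj i j then Complex.abs (x j) else 0 := by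
        intro i j
        rw [SimpleGraph.adjMatrix_apply, hy]
        split_ifs with h
        · rw [one_mul, Complex.ofReal_re]
        · rw [zero_mul, Complex.zero_re]
      have habsterm : ∀ i j, Complex.abs (gainAdj G φ i j * x j)
          = if G.Adj i j then Complex.abs (x j) else 0 := by
        intro i j
        simp only [gainAdj]
        split_ifs with h
        · rw [map_mul, ← Complex.norm_eq_abs, hφ.1 i j h, one_mul]
        · simp
      have hrowre : ∀ i, (((G.adjMatrix ℂ).mulVec y) i).re
          = ∑ j, (if G.Adj i j then Complex.abs (x j) else 0) := by
        intro i
        rw [hmv, Complex.re_sum]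
        exact Finset.sum_congr rfl fun j _ => hAterm i j
      have hpt : ∀ i, ρ * Complex.abs (x i) ≤ (((G.adjMatrix ℂ).mulVec y) i).re := by
        intro i
        have h1 : ρ * Complex.abs (x i) = Complex.abs (((gainAdj G φ).mulVec x) i) := by
          rw [hxi i, map_mul, Complex.abs_ofReal, hrlam]
        rw [h1, hrowre i, hmv]
        calc Complex.abs (∑ j, gainAdj G φ i j * x j)
            ≤ ∑ j, Complex.abs (gainAdj G φ i j * x j) :=
              Complex.abs.sum_le _ _
          _ = ∑ j, (if G.Adj i j then Complex.abs (x j) else 0) :=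
              Finset.sum_congr rfl fun j _ => habsterm i j
      have hQle : (dotProduct (star y) ((G.adjMatrix ℂ).mulVec y)).re ≤ ρ := by
        calc (dotProduct (star y) ((G.adjMatrix ℂ).mulVec y)).re
            ≤ Complex.abs (dotProduct (star y) ((G.adjMatrix ℂ).mulVec y)) :=
              Complex.re_le_abs _
          _ ≤ ρ * SpecAux2.nsq y := SpecAux2.quad_abs_le hG y
          _ = ρ := by rw [hynsq, mul_one]
      have hQge : ρ ≤ (dotProduct (star y) ((G.adjMatrix ℂ).mulVec y)).re := by
        have hform : (dotProduct (star y) ((G.adjMatrix ℂ).mulVec y)).re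
            = ∑ i, Complex.abs (x i) * (((G.adjMatrix ℂ).mulVec y) i).re := by
          simp only [dotProduct, Pi.star_apply, RCLike.star_def, Complex.re_sum]
          refine Finset.sum_congr rfl fun i _ => ?_
          rw [hy, Complex.conj_ofReal, Complex.re_ofReal_mul]
        rw [hform]
        have hbound : ∀ i ∈ Finset.univ,
            Complex.abs (x i) * (ρ * Complex.abs (x i))
              ≤ Complex.abs (x i) * (((G.adjMatrix ℂ).mulVec y) i).re :=
          fun i _ => mul_le_mul_of_nonneg_left (hpt i) (Complex.abs.nonneg _)
        have hsum := Finset.sum_le_sum hbound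
        calc ρ = ρ * SpecAux2.nsq x := by rw [hnsqx, mul_one]
          _ = ∑ i, Complex.abs (x i) * (ρ * Complex.abs (x i)) := by
              unfold SpecAux2.nsq
              rw [Finset.mul_sum]
              refine Finset.sum_congr rfl fun i _ => ?_
              rw [Complex.norm_eq_abs]
              ring
          _ ≤ _ := hsum
      have hQeq : dotProduct (star y) ((G.adjMatrix ℂ).mulVec y)
          = ((ρ * SpecAux2.nsq y : ℝ) : ℂ) := by
        have h1 := SpecAux.quadForm_eq hG y
        have h2 : (dotProduct (star y) ((G.adjMatrix ℂ).mulVec y)).re = ρ :=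
          le_antisymm hQle hQge
        rw [h1] at h2 ⊢
        rw [Complex.ofReal_re] at h2
        rw [h2, hynsq, mul_one]
      have hYeig := SpecAux3.eigen_of_quad_eq hG y hQeq
      -- positivity of |x|
      have hadjzero : ∀ i j, G.Adj i j → x i = 0 → x j = 0 := by
        intro i j hij hxi0
        have h1 : ((G.adjMatrix ℂ).mulVec y) i = 0 := by
          rw [hYeig]
          simp only [Pi.smul_apply, smul_eq_mul, hy, hxi0, map_zero,
            Complex.ofReal_zero, mul_zero]
        have h2 : (∑ j', if G.Adj i j' then Complex.abs (x j') else 0) = 0 := by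
          rw [← hrowre i, h1, Complex.zero_re]
        have h3 := (Finset.sum_eq_zero_iff_of_nonneg (fun j' _ => by
          split_ifs
          · exact Complex.abs.nonneg _
          · exact le_refl 0)).mp h2 j (Finset.mem_univ j)
        rw [if_pos hij] at h3
        exact (map_eq_zero _).mp h3
      have hxne : ∀ i, x i ≠ 0 := by
        intro i hi0
        have hall : ∀ j, x j = 0 := by
          intro j
          have hw : G.Walk i j := Classical.choice (hconn.preconnected i j)
          clear hxeig hxi
          induction hw with
          | nil => exact hi0
          | cons h q ih => exact ih (hadjzero _ _ h hi0) -- broken; fix below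
        have hz : SpecAux2.nsq x = 0 := by
          unfold SpecAux2.nsq
          refine Finset.sum_eq_zero fun j _ => ?_
          rw [hall j]
          simp
        rw [hnsqx] at hz
        norm_num at hz
      -- triangle equality at each edge
      have hstar : ∀ i j, G.Adj i j →
          ((ρ * Complex.abs (x i) : ℝ) : ℂ) * (φ i j * x j)
            = ((lam : ℂ) * x i) * ((Complex.abs (x j) : ℝ) : ℂ) := by
        intro i j hij
        have hS : ∑ j', gainAdj G φ i j' * x j' = (lam : ℂ) * x i := by
          rw [← hxi i]; rfl
        have hT : ∑ j', Complex.abs (gainAdj G φ i j' * x j') = ρ * Complex.abs (x i) := by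
          have h1 : ∑ j', Complex.abs (gainAdj G φ i j' * x j')
              = (((G.adjMatrix ℂ).mulVec y) i).re := by
            rw [hrowre i]
            exact Finset.sum_congr rfl fun j' _ => habsterm i j'
          rw [h1, hYeig]
          simp only [Pi.smul_apply, smul_eq_mul, hy, ← Complex.ofReal_mul, Complex.ofReal_re, ← hρdef]
        have htri : Complex.abs (∑ j', gainAdj G φ i j' * x j')
            = ∑ j', Complex.abs (gainAdj G φ i j' * x j') := by
          rw [hS, hT, map_mul, Complex.abs_ofReal, hrlam]
        have h2 := GainAux.tri_eq htri j
        rw [hS, hT] at h2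
        have habsj : Complex.abs (gainAdj G φ i j * x j) = Complex.abs (x j) := by
          rw [habsterm i j, if_pos hij]
        have hgij : gainAdj G φ i j = φ i j := by simp [gainAdj, hij]
        rw [habsj, hgij] at h2
        exact h2
      have hlam2 : lam = ρ ∨ lam = -ρ := (abs_eq (le_of_lt hρpos)).mp hrlam
      set D : Fin n → ℂ := fun v => x v / ((Complex.abs (x v) : ℝ) : ℂ) with hD
      have hDne : ∀ v, D v ≠ 0 := by
        intro v
        rw [hD]
        apply div_ne_zero (hxne v)
        rw [Complex.ofReal_ne_zero]
        exact Complex.abs.ne_zero (hxne v)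
      have main : ∀ ε : ℂ, (lam : ℂ) = ε * ((ρ : ℝ) : ℂ) →
          ∀ (v : Fin n) (p : G.Walk v v), walkGain φ p = ε ^ p.length := by
        intro ε hepslam
        have hφD : ∀ i j, G.Adj i j → φ i j = ε * D i * (D j)⁻¹ := by
          intro i j hij
          have h1 := hstar i j hij
          rw [hepslam] at h1
          have hai : ((Complex.abs (x i) : ℝ) : ℂ) ≠ 0 := by
            rw [Complex.ofReal_ne_zero]; exact Complex.abs.ne_zero (hxne i)
          have haj : ((Complex.abs (x j) : ℝ) : ℂ) ≠ 0 := by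
            rw [Complex.ofReal_ne_zero]; exact Complex.abs.ne_zero (hxne j)
          have hxj := hxne j
          have hρc : ((ρ : ℝ) : ℂ) ≠ 0 := by
            rw [Complex.ofReal_ne_zero]; exact hρpos.ne'
          have h1' : ((Complex.abs (x i) : ℝ) : ℂ) * (φ i j * x j)
              = ε * x i * ((Complex.abs (x j) : ℝ) : ℂ) := by
            apply mul_left_cancel₀ hρc
            push_cast at h1 ⊢
            linear_combination h1
          rw [hD]
          field_simp
          linear_combination h1'
        intro v p
        have h2 := GainAux.gain_telescope hDne hφD p
        rw [h2, mul_assoc, mul_inv_cancel₀ (hDne v), mul_one]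
      rcases hlam2 with hc | hc
      · left
        intro v p _
        rw [main 1 (by rw [hc]; push_cast; ring) v p, one_pow]
      · right
        intro v p _
        have h1 := main (-1) (by rw [hc]; push_cast; ring) v p
        rw [GainAux.gain_neg, h1, ← mul_pow]
        norm_num
  · -- Backward direction
    intro hbal
    rcases hbal with hb | hb
    · obtain ⟨D, hDabs, hsw⟩ := GainAux.exists_switch hconn hφ.1 hφ.2 hb
      exact rad_switch G φ D hDabs hsw hA hG
    · have hφn1 : ∀ i j, G.Adj i j → Complex.abs (-φ i j) = 1 := fun i j h => by
        rw [map_neg_eq_map]; exact hφ.1 i j h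
      have hφn2 : ∀ i j, G.Adj i j → (-φ i j) * (-φ j i) = 1 := fun i j h => by
        rw [neg_mul_neg]; exact hφ.2 i j h
      obtain ⟨D, hDabs, hsw⟩ := GainAux.exists_switch hconn hφn1 hφn2 hb
      have hAneg : (gainAdj G (fun i j => -φ i j)).IsHermitian := by
        rw [gainAdj_neg]; exact hA.neg
      have h1 := rad_switch G (fun i j => -φ i j) D hDabs hsw hAneg hG
      have h2 := rad_neg hA hAneg (gainAdj_neg G φ)
      rw [← h2]
      exact h1
end
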